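/- Let U : ℝ² → ℝ² be a bounded C² entire solution of ΔU = ∇_u W(U) which is a local minimizer of E, satisfying E(U,B_R) ≤ C₁R for all R > 0, and set W̃(R) := (1/R)∫_{B_R} W(U) dx. Then for all 0 < R₁ < R₂: W̃(R₂) − W̃(R₁) ≥ −√(C₁/2) · (R₂^{1/2}/R₁) · ( ∫_{B_{R₂} \ B_{R₁}} ( √(W(U)) − (1/√2)|∇U| )² dx )^{1/2}. -/

import Mathlib

open MeasureTheory Metric Set Filter
open scoped InnerProductSpace ENNReal Topology

noncomputable section

notation "ℝ²" => EuclideanSpace ℝ (Fin 2)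

/-- The Laplacian of a map `U : ℝ² → ℝ²`, as the sum of second partial derivatives. -/
def lap (U : ℝ² → ℝ²) (x : ℝ²) : ℝ² :=
  ∑ i : Fin 2, fderiv ℝ (fun y => fderiv ℝ U y (EuclideanSpace.single i 1)) x
    (EuclideanSpace.single i 1)

/-- `W` is a triple-well potential with wells `p 0, p 1, p 2`. -/
structure TripleWell (W : ℝ² → ℝ) (p : Fin 3 → ℝ²) : Prop where
  smooth : ContDiff ℝ 2 W
  nonneg : ∀ q, 0 ≤ W q
  zeros : ∀ q, W q = 0 ↔ q ∈ Set.range p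
  inj : Function.Injective p
  nondeg : ∃ b > 0, ∀ i, ∀ v : ℝ², b * ‖v‖ ^ 2 ≤ iteratedFDeriv ℝ 2 W (p i) ![v, v]
  grad_confining : ∃ M > 0, ∀ q : ℝ², M ≤ ‖q‖ → 0 ≤ ⟪q, gradient W q⟫_ℝ

/-- The Allen–Cahn energy of `u` on the set `A`. -/
def energy (W : ℝ² → ℝ) (u : ℝ² → ℝ²) (A : Set ℝ²) : ℝ :=
  ∫ x in A, ((1 / 2) * ‖fderiv ℝ u x‖ ^ 2 + W (u x))

/-- The rescaled Allen–Cahn energy `E_R`. -/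
def energyR (W : ℝ² → ℝ) (R : ℝ) (u : ℝ² → ℝ²) (A : Set ℝ²) : ℝ :=
  ∫ x in A, (R * W (u x) + (1 / (2 * R)) * ‖fderiv ℝ u x‖ ^ 2)

/-- `U` is a local minimizer of the energy `E`. -/
def IsLocalMinimizer (W : ℝ² → ℝ) (U : ℝ² → ℝ²) : Prop :=
  ∀ K : Set ℝ², IsCompact K → ∀ v : ℝ² → ℝ², ContDiff ℝ 1 v →
    (∀ x ∉ K, v x = U x) → energy W U K ≤ energy W v K

/-- `U` is a (C²) entire solution of `ΔU = ∇W(U)`. -/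
def IsEntireSolution (W : ℝ² → ℝ) (U : ℝ² → ℝ²) : Prop :=
  ContDiff ℝ 2 U ∧ ∀ x, lap U x = gradient W (U x)

/-- The degenerate Riemannian distance induced by `W`. -/
def wdist (W : ℝ² → ℝ) (a c : ℝ²) : ℝ :=
  sInf {L | ∃ γ : ℝ → ℝ², ContDiff ℝ 1 γ ∧ γ 0 = a ∧ γ 1 = c ∧
    L = Real.sqrt 2 * ∫ t in (0:ℝ)..1, Real.sqrt (W (γ t)) * ‖deriv γ t‖}

/-- `ζ` is a minimizing heteroclinic connection between the wells `a` and `c`. -/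
def IsMinHeteroclinic (W : ℝ² → ℝ) (a c : ℝ²) (ζ : ℝ → ℝ²) : Prop :=
  ContDiff ℝ 2 ζ ∧ (∀ t, deriv (deriv ζ) t = gradient W (ζ t)) ∧
  Tendsto ζ atBot (𝓝 a) ∧ Tendsto ζ atTop (𝓝 c) ∧
  (∫ t : ℝ, (W (ζ t) + (1 / 2) * ‖deriv ζ t‖ ^ 2)) = wdist W a c

/-- strict triangle inequality between the wells. -/
def StrictTriangle (W : ℝ² → ℝ) (p : Fin 3 → ℝ²) : Prop :=
  ∀ i j k : Fin 3, i ≠ j → j ≠ k → i ≠ k →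
    wdist W (p i) (p j) < wdist W (p i) (p k) + wdist W (p k) (p j)

/-- For each pair of wells there is a (unique up to translation) minimizing heteroclinic. -/
def HeteroclinicSetup (W : ℝ² → ℝ) (p : Fin 3 → ℝ²) (ζ : Fin 3 → Fin 3 → ℝ → ℝ²) : Prop :=
  ∀ i j : Fin 3, i < j →
    IsMinHeteroclinic W (p i) (p j) (ζ i j) ∧
    ∀ ζ' : ℝ → ℝ², IsMinHeteroclinic W (p i) (p j) ζ' →
      ∃ s : ℝ, ∀ t, ζ' t = ζ i j (t + s)

/-- The closed curve `Λ` made of the three heteroclinics. -/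
def hetLambda (p : Fin 3 → ℝ²) (ζ : Fin 3 → Fin 3 → ℝ → ℝ²) : Set ℝ² :=
  Set.range p ∪ Set.range (ζ 0 1) ∪ Set.range (ζ 1 2) ∪ Set.range (ζ 0 2)

/-- The open sector with vertex the origin, initial angle `θ` and opening angle `α`. -/
def sector (θ α : ℝ) : Set ℝ² :=
  {x | ∃ r : ℝ, 0 < r ∧ ∃ φ : ℝ, θ ≤ φ ∧ φ < θ + α ∧
    x = r • (WithLp.toLp 2 ![Real.cos φ, Real.sin φ] : ℝ²)}

/-- `u` is a minimal-triple-junction map: constant equal to `p ℓ` on each of three sectors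
whose opening angles satisfy the balancing (sine) condition. -/
def IsTripleJunction (W : ℝ² → ℝ) (p : Fin 3 → ℝ²) (u : ℝ² → ℝ²) : Prop :=
  ∃ θ₀ : ℝ, ∃ α : Fin 3 → ℝ, (∀ i, 0 < α i) ∧ α 0 + α 1 + α 2 = 2 * Real.pi ∧
    Real.sin (α 0) / wdist W (p 1) (p 2) = Real.sin (α 1) / wdist W (p 0) (p 2) ∧
    Real.sin (α 1) / wdist W (p 0) (p 2) = Real.sin (α 2) / wdist W (p 0) (p 1) ∧
    (∀ x ∈ sector θ₀ (α 0), u x = p 0) ∧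
    (∀ x ∈ sector (θ₀ + α 0) (α 1), u x = p 1) ∧
    (∀ x ∈ sector (θ₀ + α 0 + α 1) (α 2), u x = p 2)

/-- The blowdown `U_R(x) = U(Rx)`. -/
def blowdown (U : ℝ² → ℝ²) (R : ℝ) : ℝ² → ℝ² := fun x => U (R • x)

/-- Radial (normal) derivative `∂_ν U = ∇U · x/|x|`. -/
def radialDeriv (U : ℝ² → ℝ²) (x : ℝ²) : ℝ² := fderiv ℝ U x (‖x‖⁻¹ • x)

/-- The unit tangent direction at `x`. -/
def tangentVec (x : ℝ²) : ℝ² := WithLp.toLp 2 ![-(x 1), x 0]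

/-- Tangential derivative `∂_s U` along circles centered at the origin. -/
def tangentialDeriv (U : ℝ² → ℝ²) (x : ℝ²) : ℝ² := fderiv ℝ U x (‖x‖⁻¹ • tangentVec x)


namespace St8


def E0 : ℝ² := EuclideanSpace.single 0 1
def E1 : ℝ² := EuclideanSpace.single 1 1

def nuv (θ : ℝ) : ℝ² := Real.cos θ • E0 + Real.sin θ • E1
def tav (θ : ℝ) : ℝ² := (-Real.sin θ) • E0 + Real.cos θ • E1

lemma nuv_apply0 (θ : ℝ) : nuv θ 0 = Real.cos θ := by
  simp [nuv, E0, E1, EuclideanSpace.single_apply]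

lemma nuv_apply1 (θ : ℝ) : nuv θ 1 = Real.sin θ := by
  simp [nuv, E0, E1, EuclideanSpace.single_apply]

lemma norm_nuv (θ : ℝ) : ‖nuv θ‖ = 1 := by
  rw [EuclideanSpace.norm_eq]
  rw [Fin.sum_univ_two, nuv_apply0, nuv_apply1]
  simp only [Real.norm_eq_abs, sq_abs]
  rw [Real.cos_sq_add_sin_sq]
  exact Real.sqrt_one

lemma norm_tav (θ : ℝ) : ‖tav θ‖ = 1 := by
  have h0 : tav θ 0 = -Real.sin θ := by simp [tav, E0, E1, EuclideanSpace.single_apply]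
  have h1 : tav θ 1 = Real.cos θ := by simp [tav, E0, E1, EuclideanSpace.single_apply]
  rw [EuclideanSpace.norm_eq, Fin.sum_univ_two, h0, h1]
  simp only [Real.norm_eq_abs, sq_abs, neg_sq]
  rw [Real.sin_sq_add_cos_sq]
  exact Real.sqrt_one

lemma hasDerivAt_nuv (θ : ℝ) : HasDerivAt nuv (tav θ) θ := by
  have h1 : HasDerivAt (fun t : ℝ => Real.cos t • E0) ((-Real.sin θ) • E0) θ :=
    (Real.hasDerivAt_cos θ).smul_const E0
  have h2 : HasDerivAt (fun t : ℝ => Real.sin t • E1) (Real.cos θ • E1) θ :=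
    (Real.hasDerivAt_sin θ).smul_const E1
  exact h1.add h2

lemma hasDerivAt_tav (θ : ℝ) : HasDerivAt tav (-nuv θ) θ := by
  have h1 : HasDerivAt (fun t : ℝ => (-Real.sin t) • E0) ((-Real.cos θ) • E0) θ :=
    ((Real.hasDerivAt_sin θ).neg).smul_const E0
  have h2 : HasDerivAt (fun t : ℝ => Real.cos t • E1) ((-Real.sin θ) • E1) θ :=
    (Real.hasDerivAt_cos θ).smul_const E1
  have := h1.add h2
  refine this.congr_deriv ?_
  simp [nuv, neg_add, neg_smul]
  abel

lemma continuous_nuv : Continuous nuv :=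
  (Real.continuous_cos.smul continuous_const).add (Real.continuous_sin.smul continuous_const)

lemma continuous_tav : Continuous tav :=
  ((Real.continuous_sin.neg).smul continuous_const).add (Real.continuous_cos.smul continuous_const)

lemma nuv_periodic : nuv (-Real.pi) = nuv Real.pi := by
  simp [nuv]

lemma tav_periodic : tav (-Real.pi) = tav Real.pi := by
  simp [tav]

lemma norm_smul_nuv (r θ : ℝ) : ‖r • nuv θ‖ = |r| := by
  rw [norm_smul, norm_nuv, Real.norm_eq_abs, mul_one]


def Teq : (ℝ × ℝ) ≃ᵐ ℝ² :=
  (((MeasurableEquiv.toLp 2 (Fin 2 → ℝ)).symm).trans (MeasurableEquiv.finTwoArrow)).symm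

lemma Teq_measurePreserving : MeasurePreserving Teq volume volume := by
  have h1 := EuclideanSpace.volume_preserving_symm_measurableEquiv_toLp (Fin 2)
  have h2 := volume_preserving_finTwoArrow ℝ
  have h3 : MeasurePreserving (((MeasurableEquiv.toLp 2 (Fin 2 → ℝ)).symm).trans
      (MeasurableEquiv.finTwoArrow)) volume volume := by
    rw [MeasurableEquiv.coe_trans]
    exact h2.comp h1
  exact h3.symm _

lemma Teq_apply (a b : ℝ) : Teq (a, b) = a • E0 + b • E1 := by
  ext i
  fin_cases i
  · show Teq (a,b) 0 = (a • E0 + b • E1) 0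
    rw [show (a • E0 + b • E1) 0 = a by simp [E0, E1, EuclideanSpace.single_apply]]
    rfl
  · show Teq (a,b) 1 = (a • E0 + b • E1) 1
    rw [show (a • E0 + b • E1) 1 = b by simp [E0, E1, EuclideanSpace.single_apply]]
    rfl

lemma Teq_norm (p : ℝ × ℝ) : ‖Teq p‖ = Real.sqrt (p.1 ^ 2 + p.2 ^ 2) := by
  obtain ⟨a, b⟩ := p
  rw [Teq_apply, EuclideanSpace.norm_eq, Fin.sum_univ_two]
  have h0 : (a • E0 + b • E1) 0 = a := by simp [E0, E1, EuclideanSpace.single_apply]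
  have h1 : (a • E0 + b • E1) 1 = b := by simp [E0, E1, EuclideanSpace.single_apply]
  rw [h0, h1]
  simp [sq_abs]

lemma Teq_polar (r θ : ℝ) : Teq (r * Real.cos θ, r * Real.sin θ) = r • nuv θ := by
  rw [Teq_apply, nuv]
  rw [smul_add, smul_smul, smul_smul]

/-- Polar coordinates formula for integrals over annuli in `ℝ²`. -/
lemma polar_annulus (f : ℝ² → ℝ) (hf : Continuous f) {R₁ R₂ : ℝ} (h0 : 0 ≤ R₁) (h12 : R₁ ≤ R₂) :
    ∫ x in ball (0:ℝ²) R₂ \ ball (0:ℝ²) R₁, f x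
      = ∫ r in R₁..R₂, ∫ θ in (-Real.pi)..Real.pi, r * f (r • nuv θ) := by
  set S : Set ℝ² := ball (0:ℝ²) R₂ \ ball (0:ℝ²) R₁ with hS
  have hSm : MeasurableSet S := measurableSet_ball.diff measurableSet_ball
  -- step 1: transfer to ℝ × ℝ
  have step1 : ∫ x in S, f x = ∫ p in (⇑Teq) ⁻¹' S, f (Teq p) :=
    (Teq_measurePreserving.setIntegral_preimage_emb Teq.measurableEmbedding f S).symm
  -- step 2: as an indicator integral
  have hpre : MeasurableSet ((⇑Teq) ⁻¹' S) := Teq.measurable hSm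
  have step2 : ∫ p in (⇑Teq) ⁻¹' S, f (Teq p)
      = ∫ p : ℝ × ℝ, ((⇑Teq) ⁻¹' S).indicator (fun p => f (Teq p)) p := by
    rw [integral_indicator hpre]
  -- step 3: polar coordinates
  have step3 : ∫ p : ℝ × ℝ, ((⇑Teq) ⁻¹' S).indicator (fun p => f (Teq p)) p
      = ∫ p in polarCoord.target,
          p.1 • (((⇑Teq) ⁻¹' S).indicator (fun p => f (Teq p)) (polarCoord.symm p)) :=
    (integral_comp_polarCoord_symm _).symm
  -- step 4: rewrite integrand on the target
  have key : ∀ p ∈ polarCoord.target,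
      p.1 • (((⇑Teq) ⁻¹' S).indicator (fun p => f (Teq p)) (polarCoord.symm p))
        = (Ico R₁ R₂ ×ˢ (univ : Set ℝ)).indicator (fun p : ℝ × ℝ => p.1 * f (p.1 • nuv p.2)) p := by
    intro p hp
    have hp1 : 0 < p.1 := hp.1
    have hsymm : polarCoord.symm p = (p.1 * Real.cos p.2, p.1 * Real.sin p.2) :=
      polarCoord_symm_apply p
    have hTs : Teq (polarCoord.symm p) = p.1 • nuv p.2 := by rw [hsymm]; exact Teq_polar _ _
    have hmem : polarCoord.symm p ∈ (⇑Teq) ⁻¹' S ↔ p.1 ∈ Ico R₁ R₂ := by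
      simp only [mem_preimage, hTs, hS, mem_diff, mem_ball, dist_zero_right, norm_smul_nuv,
        abs_of_pos hp1, mem_Ico, not_lt]
      tauto
    by_cases hc : p.1 ∈ Ico R₁ R₂
    · rw [indicator_of_mem (hmem.2 hc), indicator_of_mem (by exact ⟨hc, mem_univ _⟩), hTs]
      simp [smul_eq_mul]
    · rw [indicator_of_notMem (fun h => hc (hmem.1 h)),
        indicator_of_notMem (fun h => hc h.1), smul_zero]
  have step4 : ∫ p in polarCoord.target,
      p.1 • (((⇑Teq) ⁻¹' S).indicator (fun p => f (Teq p)) (polarCoord.symm p))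
      = ∫ p in polarCoord.target,
          (Ico R₁ R₂ ×ˢ (univ : Set ℝ)).indicator (fun p : ℝ × ℝ => p.1 * f (p.1 • nuv p.2)) p :=
    setIntegral_congr_fun polarCoord.open_target.measurableSet key
  -- step 5: restrict to the product set
  have step5 : ∫ p in polarCoord.target,
      (Ico R₁ R₂ ×ˢ (univ : Set ℝ)).indicator (fun p : ℝ × ℝ => p.1 * f (p.1 • nuv p.2)) p
      = ∫ p in polarCoord.target ∩ (Ico R₁ R₂ ×ˢ (univ : Set ℝ)),
          p.1 * f (p.1 • nuv p.2) := by
    rw [setIntegral_indicator (measurableSet_Ico.prod MeasurableSet.univ)]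
  have htarget : polarCoord.target = Ioi (0:ℝ) ×ˢ Ioo (-Real.pi) Real.pi := rfl
  have hinter : polarCoord.target ∩ (Ico R₁ R₂ ×ˢ (univ : Set ℝ))
      = (Ioi (0:ℝ) ∩ Ico R₁ R₂) ×ˢ Ioo (-Real.pi) Real.pi := by
    rw [htarget, prod_inter_prod, inter_univ]
  -- step 6: a.e. replace the r-set by Ioo R₁ R₂
  have hnull : volume (({R₁} : Set ℝ) ×ˢ (univ : Set ℝ)) = 0 := by
    rw [Measure.volume_eq_prod, Measure.prod_prod, Real.volume_singleton, zero_mul]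
  have haeq : (Ioi (0:ℝ) ∩ Ico R₁ R₂) ×ˢ Ioo (-Real.pi) Real.pi
      =ᵐ[volume] (Ioo R₁ R₂ ×ˢ Ioo (-Real.pi) Real.pi : Set (ℝ × ℝ)) := by
    rw [MeasureTheory.ae_eq_set]
    constructor
    · apply measure_mono_null _ hnull
      rintro p ⟨hps, hnot⟩
      obtain ⟨⟨-, hpa, hpb⟩, hθ⟩ := hps
      refine ⟨?_, mem_univ _⟩
      by_contra h
      exact hnot ⟨⟨lt_of_le_of_ne hpa (Ne.symm h), hpb⟩, hθ⟩
    · apply measure_mono_null _ hnull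
      rintro p ⟨⟨⟨hpa, hpb⟩, hθ⟩, hnot⟩
      exfalso
      exact hnot ⟨⟨lt_of_le_of_lt h0 hpa, le_of_lt hpa, hpb⟩, hθ⟩
  have step6 : ∫ p in (Ioi (0:ℝ) ∩ Ico R₁ R₂) ×ˢ Ioo (-Real.pi) Real.pi,
        p.1 * f (p.1 • nuv p.2)
      = ∫ p in (Ioo R₁ R₂ ×ˢ Ioo (-Real.pi) Real.pi : Set (ℝ × ℝ)),
        p.1 * f (p.1 • nuv p.2) :=
    setIntegral_congr_set haeq
  -- step 7: Fubini
  have hcont : Continuous (fun p : ℝ × ℝ => p.1 * f (p.1 • nuv p.2)) := by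
    apply continuous_fst.mul
    exact hf.comp (continuous_fst.smul (continuous_nuv.comp continuous_snd))
  have hint : IntegrableOn (fun p : ℝ × ℝ => p.1 * f (p.1 • nuv p.2))
      (Ioo R₁ R₂ ×ˢ Ioo (-Real.pi) Real.pi) volume := by
    apply (hcont.continuousOn.integrableOn_compact
      ((isCompact_Icc).prod (isCompact_Icc : IsCompact (Icc (-Real.pi) Real.pi)))).mono_set
    exact prod_mono Ioo_subset_Icc_self Ioo_subset_Icc_self
  have step7 : ∫ p in (Ioo R₁ R₂ ×ˢ Ioo (-Real.pi) Real.pi : Set (ℝ × ℝ)),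
        p.1 * f (p.1 • nuv p.2)
      = ∫ r in Ioo R₁ R₂, ∫ θ in Ioo (-Real.pi) Real.pi, r * f (r • nuv θ) := by
    rw [Measure.volume_eq_prod] at hint ⊢
    exact setIntegral_prod _ hint
  -- step 8: to interval integrals
  have step8 : ∫ r in Ioo R₁ R₂, ∫ θ in Ioo (-Real.pi) Real.pi, r * f (r • nuv θ)
      = ∫ r in R₁..R₂, ∫ θ in (-Real.pi)..Real.pi, r * f (r • nuv θ) := by
    rw [intervalIntegral.integral_of_le h12, integral_Ioc_eq_integral_Ioo]
    apply setIntegral_congr_fun measurableSet_Ioo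
    intro r _
    dsimp only
    rw [intervalIntegral.integral_of_le (by linarith [Real.pi_pos] :
      -Real.pi ≤ Real.pi), integral_Ioc_eq_integral_Ioo]
  rw [step1, step2, step3, step4, step5, hinter, step6, step7, step8]


variable (U : ℝ² → ℝ²) (W : ℝ² → ℝ)

def D2U (x : ℝ²) : ℝ² →L[ℝ] ℝ² →L[ℝ] ℝ² := fderiv ℝ (fderiv ℝ U) x

def ptm (r θ : ℝ) : ℝ² := r • nuv θ

variable {U W}

section Calc
set_option linter.unusedSectionVars false
variable (hU2 : ContDiff ℝ 2 U) (hW2 : ContDiff ℝ 2 W)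
include hU2

lemma hasFDerivAt_U (x : ℝ²) : HasFDerivAt U (fderiv ℝ U x) x :=
  ((hU2.differentiable two_ne_zero) x).hasFDerivAt

lemma contDiff_DU : ContDiff ℝ 1 (fderiv ℝ U) :=
  hU2.fderiv_right (le_refl _)

lemma hasFDerivAt_DU (x : ℝ²) : HasFDerivAt (fderiv ℝ U) (D2U U x) x :=
  (((contDiff_DU hU2).differentiable one_ne_zero) x).hasFDerivAt

lemma cont_DU : Continuous (fderiv ℝ U) := (contDiff_DU hU2).continuous

lemma cont_D2U : Continuous (D2U U) := (contDiff_DU hU2).continuous_fderiv one_ne_zero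

lemma d2_symm (x : ℝ²) (v w : ℝ²) : D2U U x v w = D2U U x w v :=
  second_derivative_symmetric (f := U) (fun y => hasFDerivAt_U hU2 y) (hasFDerivAt_DU hU2 x) v w

lemma lap_eq (x : ℝ²) : lap U x = D2U U x E0 E0 + D2U U x E1 E1 := by
  have key : ∀ e : ℝ², fderiv ℝ (fun y => fderiv ℝ U y e) x = (D2U U x).flip e := by
    intro e
    have h : HasFDerivAt (fun y => fderiv ℝ U y e)
        ((ContinuousLinearMap.apply ℝ ℝ² e).comp (D2U U x)) x :=
      (ContinuousLinearMap.apply ℝ ℝ² e).hasFDerivAt.comp x (hasFDerivAt_DU hU2 x)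
    rw [h.fderiv]
    ext v
    simp [ContinuousLinearMap.apply]
  rw [lap, Fin.sum_univ_two, key, key]
  rfl

lemma rot_identity (x : ℝ²) (θ : ℝ) :
    D2U U x (nuv θ) (nuv θ) + D2U U x (tav θ) (tav θ) = D2U U x E0 E0 + D2U U x E1 E1 := by
  have h : Real.cos θ ^ 2 + Real.sin θ ^ 2 = 1 := Real.cos_sq_add_sin_sq θ
  simp only [nuv, tav, map_add, _root_.map_smul, ContinuousLinearMap.add_apply,
    ContinuousLinearMap.coe_smul', Pi.smul_apply]
  match_scalars <;> linarith [h]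

omit hU2 in
include hW2 in
lemma fderiv_W_inner (y v : ℝ²) : fderiv ℝ W y v = ⟪gradient W y, v⟫_ℝ := by
  have hd : DifferentiableAt ℝ W y := (hW2.differentiable two_ne_zero).differentiableAt
  have hf := hasGradientAt_iff_hasFDerivAt.1 hd.hasGradientAt
  rw [hf.fderiv]
  rfl

omit hU2 in
include hW2 in
lemma cont_gradW : Continuous (gradient W) := by
  have : Continuous (fderiv ℝ W) := hW2.continuous_fderiv two_ne_zero
  exact (InnerProductSpace.toDual ℝ ℝ²).symm.continuous.comp this

-- derivative in r of the point map
omit hU2 in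
lemma hasDerivAt_ptm_r (θ r : ℝ) : HasDerivAt (fun s => ptm s θ) (nuv θ) r := by
  have := (hasDerivAt_id r).smul_const (nuv θ)
  rw [one_smul] at this; exact this

omit hU2 in
lemma hasDerivAt_ptm_θ (r θ : ℝ) : HasDerivAt (fun t => ptm r t) (r • tav θ) θ :=
  (hasDerivAt_nuv θ).const_smul r

omit hU2 in
lemma cont_ptm : Continuous (fun p : ℝ × ℝ => ptm p.1 p.2) :=
  continuous_fst.smul (continuous_nuv.comp continuous_snd)

-- derivative in r of the fderiv along the ray
lemma hasDerivAt_L_r (θ r : ℝ) :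
    HasDerivAt (fun s => fderiv ℝ U (ptm s θ)) (D2U U (ptm r θ) (nuv θ)) r :=
  (hasFDerivAt_DU hU2 (ptm r θ)).comp_hasDerivAt r (hasDerivAt_ptm_r θ r)

lemma hasDerivAt_L_θ (r θ : ℝ) :
    HasDerivAt (fun t => fderiv ℝ U (ptm r t)) (D2U U (ptm r θ) (r • tav θ)) θ :=
  (hasFDerivAt_DU hU2 (ptm r θ)).comp_hasDerivAt θ (hasDerivAt_ptm_θ r θ)

end Calc



variable {U : ℝ² → ℝ²} {W : ℝ² → ℝ}

/-- The integrands: `aI` = radial kinetic density, `qI` = tangential, `wI` = potential. -/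
def aI (U : ℝ² → ℝ²) (r θ : ℝ) : ℝ :=
  (1/2) * ⟪fderiv ℝ U (ptm r θ) (nuv θ), fderiv ℝ U (ptm r θ) (nuv θ)⟫_ℝ
def qI (U : ℝ² → ℝ²) (r θ : ℝ) : ℝ :=
  (1/2) * ⟪fderiv ℝ U (ptm r θ) (tav θ), fderiv ℝ U (ptm r θ) (tav θ)⟫_ℝ
def wI (U : ℝ² → ℝ²) (W : ℝ² → ℝ) (r θ : ℝ) : ℝ := W (U (ptm r θ))
def aI' (U : ℝ² → ℝ²) (r θ : ℝ) : ℝ :=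
  ⟪D2U U (ptm r θ) (nuv θ) (nuv θ), fderiv ℝ U (ptm r θ) (nuv θ)⟫_ℝ
def qI' (U : ℝ² → ℝ²) (r θ : ℝ) : ℝ :=
  ⟪D2U U (ptm r θ) (nuv θ) (tav θ), fderiv ℝ U (ptm r θ) (tav θ)⟫_ℝ
def wI' (U : ℝ² → ℝ²) (W : ℝ² → ℝ) (r θ : ℝ) : ℝ :=
  ⟪gradient W (U (ptm r θ)), fderiv ℝ U (ptm r θ) (nuv θ)⟫_ℝ

lemma hasDerivAt_ur (hU2 : ContDiff ℝ 2 U) (θ r : ℝ) :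
    HasDerivAt (fun s => fderiv ℝ U (ptm s θ) (nuv θ))
      (D2U U (ptm r θ) (nuv θ) (nuv θ)) r := by
  have := (hasDerivAt_L_r hU2 θ r).clm_apply (hasDerivAt_const r (nuv θ))
  simpa using this

lemma hasDerivAt_ut (hU2 : ContDiff ℝ 2 U) (θ r : ℝ) :
    HasDerivAt (fun s => fderiv ℝ U (ptm s θ) (tav θ))
      (D2U U (ptm r θ) (nuv θ) (tav θ)) r := by
  have := (hasDerivAt_L_r hU2 θ r).clm_apply (hasDerivAt_const r (tav θ))
  simpa using this

lemma hasDerivAt_aI (hU2 : ContDiff ℝ 2 U) (θ r : ℝ) :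
    HasDerivAt (fun s => aI U s θ) (aI' U r θ) r := by
  have h := ((hasDerivAt_ur hU2 θ r).inner ℝ (hasDerivAt_ur hU2 θ r)).const_mul (1/2 : ℝ)
  refine h.congr_deriv ?_
  have hc : ⟪fderiv ℝ U (ptm r θ) (nuv θ), D2U U (ptm r θ) (nuv θ) (nuv θ)⟫_ℝ
      = ⟪D2U U (ptm r θ) (nuv θ) (nuv θ), fderiv ℝ U (ptm r θ) (nuv θ)⟫_ℝ :=
    real_inner_comm _ _
  rw [aI', hc]
  ring

lemma hasDerivAt_qI (hU2 : ContDiff ℝ 2 U) (θ r : ℝ) :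
    HasDerivAt (fun s => qI U s θ) (qI' U r θ) r := by
  have h := ((hasDerivAt_ut hU2 θ r).inner ℝ (hasDerivAt_ut hU2 θ r)).const_mul (1/2 : ℝ)
  refine h.congr_deriv ?_
  have hc : ⟪fderiv ℝ U (ptm r θ) (tav θ), D2U U (ptm r θ) (nuv θ) (tav θ)⟫_ℝ
      = ⟪D2U U (ptm r θ) (nuv θ) (tav θ), fderiv ℝ U (ptm r θ) (tav θ)⟫_ℝ :=
    real_inner_comm _ _
  rw [qI', hc]
  ring

lemma hasDerivAt_wI (hU2 : ContDiff ℝ 2 U) (hW2 : ContDiff ℝ 2 W) (θ r : ℝ) :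
    HasDerivAt (fun s => wI U W s θ) (wI' U W r θ) r := by
  have hx := hasDerivAt_ptm_r θ r
  have hUd : HasDerivAt (fun s => U (ptm s θ)) (fderiv ℝ U (ptm r θ) (nuv θ)) r :=
    (hasFDerivAt_U hU2 (ptm r θ)).comp_hasDerivAt r hx
  have hWd : HasDerivAt (fun s => W (U (ptm s θ)))
      (fderiv ℝ W (U (ptm r θ)) (fderiv ℝ U (ptm r θ) (nuv θ))) r :=
    (((hW2.differentiable two_ne_zero) (U (ptm r θ))).hasFDerivAt).comp_hasDerivAt r hUd
  rw [fderiv_W_inner hW2] at hWd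
  exact hWd

-- continuity of all integrands as functions of (r, θ)
lemma cont_uf (hU2 : ContDiff ℝ 2 U) (v : ℝ → ℝ²) (hv : Continuous v) :
    Continuous (fun p : ℝ × ℝ => fderiv ℝ U (ptm p.1 p.2) (v p.2)) :=
  ((cont_DU hU2).comp cont_ptm).clm_apply (hv.comp continuous_snd)

lemma cont_aI (hU2 : ContDiff ℝ 2 U) : Continuous (fun p : ℝ × ℝ => aI U p.1 p.2) :=
  continuous_const.mul ((cont_uf hU2 nuv continuous_nuv).inner (cont_uf hU2 nuv continuous_nuv))

lemma cont_qI (hU2 : ContDiff ℝ 2 U) : Continuous (fun p : ℝ × ℝ => qI U p.1 p.2) :=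
  continuous_const.mul ((cont_uf hU2 tav continuous_tav).inner (cont_uf hU2 tav continuous_tav))

lemma cont_wI (hU2 : ContDiff ℝ 2 U) (hW2 : ContDiff ℝ 2 W) :
    Continuous (fun p : ℝ × ℝ => wI U W p.1 p.2) :=
  hW2.continuous.comp (hU2.continuous.comp cont_ptm)

lemma cont_d2f (hU2 : ContDiff ℝ 2 U) (v w : ℝ → ℝ²) (hv : Continuous v) (hw : Continuous w) :
    Continuous (fun p : ℝ × ℝ => D2U U (ptm p.1 p.2) (v p.2) (w p.2)) :=
  (((cont_D2U hU2).comp cont_ptm).clm_apply (hv.comp continuous_snd)).clm_apply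
    (hw.comp continuous_snd)

lemma cont_aI' (hU2 : ContDiff ℝ 2 U) : Continuous (fun p : ℝ × ℝ => aI' U p.1 p.2) :=
  (cont_d2f hU2 nuv nuv continuous_nuv continuous_nuv).inner (cont_uf hU2 nuv continuous_nuv)

lemma cont_qI' (hU2 : ContDiff ℝ 2 U) : Continuous (fun p : ℝ × ℝ => qI' U p.1 p.2) :=
  (cont_d2f hU2 nuv tav continuous_nuv continuous_tav).inner (cont_uf hU2 tav continuous_tav)

lemma cont_wI' (hU2 : ContDiff ℝ 2 U) (hW2 : ContDiff ℝ 2 W) :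
    Continuous (fun p : ℝ × ℝ => wI' U W p.1 p.2) :=
  ((cont_gradW hW2).comp (hU2.continuous.comp cont_ptm)).inner (cont_uf hU2 nuv continuous_nuv)

/-- Differentiation under the integral sign over `θ ∈ [-π, π]`. -/
lemma paramDeriv {H H' : ℝ → ℝ → ℝ}
    (hH : Continuous (fun p : ℝ × ℝ => H p.1 p.2))
    (hH' : Continuous (fun p : ℝ × ℝ => H' p.1 p.2))
    (hd : ∀ θ r, HasDerivAt (fun s => H s θ) (H' r θ) r) (r₀ : ℝ) :
    HasDerivAt (fun r => ∫ θ in (-Real.pi)..Real.pi, H r θ)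
      (∫ θ in (-Real.pi)..Real.pi, H' r₀ θ) r₀ := by
  obtain ⟨C, hC⟩ := (((isCompact_Icc (a := r₀ - 1) (b := r₀ + 1)).prod
    (isCompact_uIcc (a := -Real.pi) (b := Real.pi)))).exists_bound_of_continuousOn
    hH'.continuousOn
  have main := intervalIntegral.hasDerivAt_integral_of_dominated_loc_of_deriv_le
    (μ := volume) (F := fun r θ => H r θ) (F' := fun r θ => H' r θ) (x₀ := r₀)
    (bound := fun _ => C) (s := Metric.ball r₀ 1) (Metric.ball_mem_nhds r₀ one_pos)
    (Filter.Eventually.of_forall (fun x =>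
      ((hH.comp (continuous_const.prodMk continuous_id)).aestronglyMeasurable)))
    ((hH.comp (continuous_const.prodMk continuous_id)).intervalIntegrable _ _)
    ((hH'.comp (continuous_const.prodMk continuous_id)).aestronglyMeasurable)
    (Filter.Eventually.of_forall (fun t ht x hx => by
      apply hC (x, t)
      constructor
      · simp only [mem_ball, Real.dist_eq] at hx
        constructor <;> [linarith [abs_le.1 (le_of_lt hx)] ; linarith [(abs_le.1 (le_of_lt hx)).2]]
      · exact uIoc_subset_uIcc ht))
    (intervalIntegrable_const)
    (Filter.Eventually.of_forall (fun t ht x hx => hd t x))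
  exact main.2



variable {U : ℝ² → ℝ²} {W : ℝ² → ℝ}

lemma contθ {H : ℝ → ℝ → ℝ} (h : Continuous (fun p : ℝ × ℝ => H p.1 p.2)) (r : ℝ) :
    Continuous (fun θ => H r θ) := h.comp (continuous_const.prodMk continuous_id)

def abar (U : ℝ² → ℝ²) (r : ℝ) : ℝ := ∫ θ in (-Real.pi)..Real.pi, aI U r θ
def qbar (U : ℝ² → ℝ²) (r : ℝ) : ℝ := ∫ θ in (-Real.pi)..Real.pi, qI U r θ
def wbar (U : ℝ² → ℝ²) (W : ℝ² → ℝ) (r : ℝ) : ℝ := ∫ θ in (-Real.pi)..Real.pi, wI U W r θ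

lemma hasDerivAt_abar (hU2 : ContDiff ℝ 2 U) (r : ℝ) :
    HasDerivAt (abar U) (∫ θ in (-Real.pi)..Real.pi, aI' U r θ) r :=
  paramDeriv (cont_aI hU2) (cont_aI' hU2) (hasDerivAt_aI hU2) r

lemma hasDerivAt_qbar (hU2 : ContDiff ℝ 2 U) (r : ℝ) :
    HasDerivAt (qbar U) (∫ θ in (-Real.pi)..Real.pi, qI' U r θ) r :=
  paramDeriv (cont_qI hU2) (cont_qI' hU2) (hasDerivAt_qI hU2) r

lemma hasDerivAt_wbar (hU2 : ContDiff ℝ 2 U) (hW2 : ContDiff ℝ 2 W) (r : ℝ) :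
    HasDerivAt (wbar U W) (∫ θ in (-Real.pi)..Real.pi, wI' U W r θ) r :=
  paramDeriv (cont_wI hU2 hW2) (cont_wI' hU2 hW2) (hasDerivAt_wI hU2 hW2) r

lemma pde_rot (hU2 : ContDiff ℝ 2 U) (hpde : ∀ x, lap U x = gradient W (U x)) (x : ℝ²) (θ : ℝ) :
    D2U U x (nuv θ) (nuv θ) + D2U U x (tav θ) (tav θ) = gradient W (U x) := by
  rw [rot_identity hU2, ← lap_eq hU2, hpde x]

/-- The key integration-by-parts (in `θ`) identity. -/
lemma I1 (hU2 : ContDiff ℝ 2 U) (hW2 : ContDiff ℝ 2 W)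
    (hpde : ∀ x, lap U x = gradient W (U x)) (r : ℝ) :
    r * ((∫ θ in (-Real.pi)..Real.pi, qI' U r θ)
        + (∫ θ in (-Real.pi)..Real.pi, wI' U W r θ)
        - (∫ θ in (-Real.pi)..Real.pi, aI' U r θ))
      = 2 * abar U r - 2 * qbar U r := by
  set φ : ℝ → ℝ := fun θ => ⟪fderiv ℝ U (ptm r θ) (nuv θ), fderiv ℝ U (ptm r θ) (tav θ)⟫_ℝ
    with hφdef
  set φ' : ℝ → ℝ := fun θ =>
    r * (qI' U r θ + wI' U W r θ - aI' U r θ) + 2 * qI U r θ - 2 * aI U r θ with hφ'def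
  have hder : ∀ θ, HasDerivAt φ (φ' θ) θ := by
    intro θ
    have h1 : HasDerivAt (fun t => fderiv ℝ U (ptm r t) (nuv t))
        (D2U U (ptm r θ) (r • tav θ) (nuv θ) + fderiv ℝ U (ptm r θ) (tav θ)) θ :=
      (hasDerivAt_L_θ hU2 r θ).clm_apply (hasDerivAt_nuv θ)
    have h2 : HasDerivAt (fun t => fderiv ℝ U (ptm r t) (tav t))
        (D2U U (ptm r θ) (r • tav θ) (tav θ) + fderiv ℝ U (ptm r θ) (-nuv θ)) θ :=
      (hasDerivAt_L_θ hU2 r θ).clm_apply (hasDerivAt_tav θ)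
    have h := h1.inner ℝ h2
    refine h.congr_deriv ?_
    -- identify the derivative value
    set L := fderiv ℝ U (ptm r θ)
    set B := D2U U (ptm r θ)
    have hBsmul : B (r • tav θ) = r • (B (tav θ)) := by rw [_root_.map_smul]
    have hpderot : B (tav θ) (tav θ) = gradient W (U (ptm r θ)) - B (nuv θ) (nuv θ) := by
      rw [eq_sub_iff_add_eq, ← pde_rot hU2 hpde (ptm r θ) θ]
      abel
    have e1 : ⟪L (nuv θ), B (r • tav θ) (tav θ) + L (-nuv θ)⟫_ℝ
        = r * ⟪L (nuv θ), gradient W (U (ptm r θ))⟫_ℝ - r * ⟪L (nuv θ), B (nuv θ) (nuv θ)⟫_ℝ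
          - ⟪L (nuv θ), L (nuv θ)⟫_ℝ := by
      rw [hBsmul, ContinuousLinearMap.smul_apply, hpderot, map_neg, inner_add_right,
        inner_neg_right, real_inner_smul_right, inner_sub_right]
      ring
    have e2 : ⟪B (r • tav θ) (nuv θ) + L (tav θ), L (tav θ)⟫_ℝ
        = r * ⟪B (tav θ) (nuv θ), L (tav θ)⟫_ℝ + ⟪L (tav θ), L (tav θ)⟫_ℝ := by
      rw [hBsmul, ContinuousLinearMap.smul_apply, inner_add_left, real_inner_smul_left]
    rw [e1, e2, hφ'def]
    have hq : ⟪B (tav θ) (nuv θ), L (tav θ)⟫_ℝ = qI' U r θ := by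
      rw [qI']
      rw [d2_symm hU2 (ptm r θ) (tav θ) (nuv θ)]
    have hw : ⟪L (nuv θ), gradient W (U (ptm r θ))⟫_ℝ = wI' U W r θ := by
      rw [wI', real_inner_comm]
    have ha : ⟪L (nuv θ), B (nuv θ) (nuv θ)⟫_ℝ = aI' U r θ := by
      rw [aI', real_inner_comm]
    have haa : ⟪L (nuv θ), L (nuv θ)⟫_ℝ = 2 * aI U r θ := by rw [aI]; ring
    have hqq : ⟪L (tav θ), L (tav θ)⟫_ℝ = 2 * qI U r θ := by rw [qI]; ring
    rw [hq, hw, ha, haa, hqq]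
    ring
  have hφ'cont : Continuous φ' := by
    apply Continuous.sub
    apply Continuous.add
    · apply continuous_const.mul
      exact ((contθ (cont_qI' hU2) r).add (contθ (cont_wI' hU2 hW2) r)).sub
        (contθ (cont_aI' hU2) r)
    · exact continuous_const.mul (contθ (cont_qI hU2) r)
    · exact continuous_const.mul (contθ (cont_aI hU2) r)
  have hzero : ∫ θ in (-Real.pi)..Real.pi, φ' θ = 0 := by
    rw [intervalIntegral.integral_eq_sub_of_hasDerivAt (fun θ _ => hder θ)
      (hφ'cont.intervalIntegrable (μ := volume) _ _)]
    have : ptm r (-Real.pi) = ptm r Real.pi := by rw [ptm, ptm, nuv_periodic]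
    rw [hφdef]
    simp only [this, nuv_periodic, tav_periodic, sub_self]
  -- split the integral
  have hIq := (contθ (cont_qI' hU2) r).intervalIntegrable (μ := volume) (-Real.pi) Real.pi
  have hIw := (contθ (cont_wI' hU2 hW2) r).intervalIntegrable (μ := volume) (-Real.pi) Real.pi
  have hIa := (contθ (cont_aI' hU2) r).intervalIntegrable (μ := volume) (-Real.pi) Real.pi
  have hIq0 := (contθ (cont_qI hU2) r).intervalIntegrable (μ := volume) (-Real.pi) Real.pi
  have hIa0 := (contθ (cont_aI hU2) r).intervalIntegrable (μ := volume) (-Real.pi) Real.pi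
  have hsplit : ∫ θ in (-Real.pi)..Real.pi, φ' θ
      = r * ((∫ θ in (-Real.pi)..Real.pi, qI' U r θ)
        + (∫ θ in (-Real.pi)..Real.pi, wI' U W r θ)
        - (∫ θ in (-Real.pi)..Real.pi, aI' U r θ))
        + 2 * qbar U r - 2 * abar U r := by
    rw [hφ'def]
    rw [intervalIntegral.integral_sub (((((hIq.add hIw).sub hIa).const_mul r).add
      (hIq0.const_mul 2))) (hIa0.const_mul 2)]
    rw [intervalIntegral.integral_add ((((hIq.add hIw).sub hIa).const_mul r)) (hIq0.const_mul 2)]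
    rw [intervalIntegral.integral_const_mul, intervalIntegral.integral_const_mul,
      intervalIntegral.integral_const_mul]
    rw [intervalIntegral.integral_sub (hIq.add hIw) hIa, intervalIntegral.integral_add hIq hIw]
    rw [qbar, abar]
  rw [hsplit] at hzero
  linarith

def Phi (U : ℝ² → ℝ²) (W : ℝ² → ℝ) (R : ℝ) : ℝ :=
  R * (qbar U R - abar U R + wbar U W R) / 2

def psi (U : ℝ² → ℝ²) (W : ℝ² → ℝ) (r : ℝ) : ℝ :=
  (wbar U W r + abar U r - qbar U r) / 2

lemma hasDerivAt_Phi (hU2 : ContDiff ℝ 2 U) (hW2 : ContDiff ℝ 2 W)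
    (hpde : ∀ x, lap U x = gradient W (U x)) (r : ℝ) :
    HasDerivAt (Phi U W) (psi U W r) r := by
  have h1 : HasDerivAt (fun R => R * (qbar U R - abar U R + wbar U W R) / 2)
      ((1 * (qbar U r - abar U r + wbar U W r) + r *
        ((∫ θ in (-Real.pi)..Real.pi, qI' U r θ)
          - (∫ θ in (-Real.pi)..Real.pi, aI' U r θ)
          + (∫ θ in (-Real.pi)..Real.pi, wI' U W r θ))) / 2) r := by
    apply HasDerivAt.div_const
    exact (hasDerivAt_id r).mul (((hasDerivAt_qbar hU2 r).sub (hasDerivAt_abar hU2 r)).add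
      (hasDerivAt_wbar hU2 hW2 r))
  have hI := I1 hU2 hW2 hpde r
  refine h1.congr_deriv ?_
  rw [psi]
  have : r * ((∫ θ in (-Real.pi)..Real.pi, qI' U r θ)
      - (∫ θ in (-Real.pi)..Real.pi, aI' U r θ)
      + (∫ θ in (-Real.pi)..Real.pi, wI' U W r θ))
      = 2 * abar U r - 2 * qbar U r := by rw [← hI]; ring
  rw [this]
  ring

lemma cont_psi (hU2 : ContDiff ℝ 2 U) (hW2 : ContDiff ℝ 2 W) :
    Continuous (psi U W) := by
  have h1 : Continuous (abar U) := by
    refine continuous_iff_continuousAt.2 (fun r => (hasDerivAt_abar hU2 r).continuousAt)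
  have h2 : Continuous (qbar U) := by
    refine continuous_iff_continuousAt.2 (fun r => (hasDerivAt_qbar hU2 r).continuousAt)
  have h3 : Continuous (wbar U W) := by
    refine continuous_iff_continuousAt.2 (fun r => (hasDerivAt_wbar hU2 hW2 r).continuousAt)
  exact ((h3.add h1).sub h2).div_const 2

/-- Pohozaev identity, integrated form. -/
lemma pohozaev (hU2 : ContDiff ℝ 2 U) (hW2 : ContDiff ℝ 2 W)
    (hpde : ∀ x, lap U x = gradient W (U x)) (R : ℝ) :
    (∫ r in (0:ℝ)..R, r * wbar U W r) = R * Phi U W R := by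
  set Ψ : ℝ → ℝ := fun R => (∫ r in (0:ℝ)..R, r * wbar U W r) - R * Phi U W R with hΨdef
  have hwbar_cont : Continuous (fun r => r * wbar U W r) :=
    continuous_id.mul (continuous_iff_continuousAt.2
      (fun r => (hasDerivAt_wbar hU2 hW2 r).continuousAt))
  have hΨder : ∀ r : ℝ, HasDerivAt Ψ 0 r := by
    intro r
    have hG : HasDerivAt (fun R => ∫ s in (0:ℝ)..R, s * wbar U W s) (r * wbar U W r) r := by
      apply intervalIntegral.integral_hasDerivAt_right
        (hwbar_cont.intervalIntegrable _ _)
        (hwbar_cont.stronglyMeasurableAtFilter _ _)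
        hwbar_cont.continuousAt
    have hP : HasDerivAt (fun R => R * Phi U W R)
        (1 * Phi U W r + r * psi U W r) r :=
      (hasDerivAt_id r).mul (hasDerivAt_Phi hU2 hW2 hpde r)
    have h := hG.sub hP
    refine h.congr_deriv ?_
    rw [Phi, psi]
    ring
  have key : Ψ R - Ψ 0 = 0 := by
    rw [← intervalIntegral.integral_eq_sub_of_hasDerivAt (f := Ψ) (f' := fun _ => (0:ℝ))
      (fun x _ => hΨder x) (intervalIntegrable_const)]
    simp
  have hΨ0 : Ψ 0 = 0 := by
    rw [hΨdef]
    simp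
  have hR : Ψ R = 0 := by rw [hΨ0] at key; linarith
  have h2 : (∫ r in (0:ℝ)..R, r * wbar U W r) - R * Phi U W R = 0 := by simpa using hR
  linarith



variable {U : ℝ² → ℝ²} {W : ℝ² → ℝ}

lemma ball_W_eq (hU2 : ContDiff ℝ 2 U) (hW2 : ContDiff ℝ 2 W) {R : ℝ} (hR : 0 ≤ R) :
    ∫ x in ball (0:ℝ²) R, W (U x) = ∫ r in (0:ℝ)..R, r * wbar U W r := by
  have h := polar_annulus (fun x => W (U x)) (hW2.continuous.comp hU2.continuous)
    (le_refl (0:ℝ)) hR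
  rw [Metric.ball_zero, diff_empty] at h
  rw [h]
  apply intervalIntegral.integral_congr
  intro r _
  exact intervalIntegral.integral_const_mul _ _



variable {U : ℝ² → ℝ²} {W : ℝ² → ℝ}

/-- Cauchy–Schwarz inequality on a bounded measurable set. -/
lemma cauchy_schwarz_set (f g : ℝ² → ℝ) (hf : Continuous f) (hg : Continuous g)
    (hgnn : ∀ x, 0 ≤ g x) {R : ℝ} {S : Set ℝ²} (hSb : S ⊆ ball (0:ℝ²) R) :
    ∫ x in S, |f x| * g x
      ≤ Real.sqrt (∫ x in S, f x ^ 2) * Real.sqrt (∫ x in S, g x ^ 2) := by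
  haveI : IsFiniteMeasure (volume.restrict S) := by
    constructor
    rw [Measure.restrict_apply_univ]
    exact lt_of_le_of_lt (measure_mono hSb) measure_ball_lt_top
  have h22 : (2:ℝ).HolderConjugate 2 := Real.HolderConjugate.two_two
  have hint : ∀ (u : ℝ² → ℝ), Continuous u → Integrable (fun x => u x ^ 2) (volume.restrict S) := by
    intro u hu
    have h1 : IntegrableOn (fun x => u x ^ 2) (closedBall (0:ℝ²) R) volume :=
      ((hu.pow 2).continuousOn).integrableOn_compact (isCompact_closedBall _ _)
    exact h1.mono_set (hSb.trans ball_subset_closedBall)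
  have hfm : MemLp (fun x => |f x|) (ENNReal.ofReal 2) (volume.restrict S) := by
    rw [show ENNReal.ofReal 2 = 2 by simp [ENNReal.ofReal_ofNat]]
    apply (memLp_two_iff_integrable_sq (hf.abs.aestronglyMeasurable.restrict)).2
    have := hint f hf
    apply this.congr
    · filter_upwards with x
      rw [sq_abs]
  have hgm : MemLp g (ENNReal.ofReal 2) (volume.restrict S) := by
    rw [show ENNReal.ofReal 2 = 2 by simp [ENNReal.ofReal_ofNat]]
    exact (memLp_two_iff_integrable_sq (hg.aestronglyMeasurable.restrict)).2 (hint g hg)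
  have hkey := integral_mul_le_Lp_mul_Lq_of_nonneg h22
    (Filter.Eventually.of_forall (fun x => abs_nonneg (f x)))
    (Filter.Eventually.of_forall (fun x => hgnn x)) hfm hgm
  have e1 : ∫ x in S, |f x| ^ (2:ℝ) = ∫ x in S, f x ^ 2 := by
    apply integral_congr_ae
    filter_upwards with x
    rw [show (2:ℝ) = ((2:ℕ):ℝ) by norm_num, Real.rpow_natCast, sq_abs]
  have e2 : ∫ x in S, g x ^ (2:ℝ) = ∫ x in S, g x ^ 2 := by
    apply integral_congr_ae
    filter_upwards with x
    rw [show (2:ℝ) = ((2:ℕ):ℝ) by norm_num, Real.rpow_natCast]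
  rw [e1, e2] at hkey
  calc ∫ x in S, |f x| * g x ≤ (∫ x in S, f x ^ 2) ^ (1/(2:ℝ)) * (∫ x in S, g x ^ 2) ^ (1/(2:ℝ)) :=
        hkey
    _ = Real.sqrt (∫ x in S, f x ^ 2) * Real.sqrt (∫ x in S, g x ^ 2) := by
        rw [Real.sqrt_eq_rpow, Real.sqrt_eq_rpow]


end St8

open St8

/-- almost-monotonicity estimate for `W̃(R) = (1/R)∫_{B_R} W(U)`. -/
theorem statement8 (W : ℝ² → ℝ) (p : Fin 3 → ℝ²) (hW : TripleWell W p)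
    (U : ℝ² → ℝ²) (hU : IsEntireSolution W U) (hbd : ∃ C : ℝ, ∀ x, ‖U x‖ ≤ C)
    (hmin : IsLocalMinimizer W U)
    (C₁ : ℝ) (hC₁ : ∀ R > 0, energy W U (Metric.ball 0 R) ≤ C₁ * R) :
    ∀ R₁ R₂ : ℝ, 0 < R₁ → R₁ < R₂ →
      (1 / R₂) * (∫ x in Metric.ball (0:ℝ²) R₂, W (U x))
        - (1 / R₁) * (∫ x in Metric.ball (0:ℝ²) R₁, W (U x))
      ≥ -(Real.sqrt (C₁ / 2)) * (Real.sqrt R₂ / R₁) *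
          Real.sqrt (∫ x in Metric.ball (0:ℝ²) R₂ \ Metric.ball (0:ℝ²) R₁,
            (Real.sqrt (W (U x)) - (1 / Real.sqrt 2) * ‖fderiv ℝ U x‖) ^ 2) := by
  intro R₁ R₂ hR₁ hR₁₂
  have hU2 : ContDiff ℝ 2 U := hU.1
  have hpde : ∀ x, lap U x = gradient W (U x) := hU.2
  have hW2 : ContDiff ℝ 2 W := hW.smooth
  have hWnn : ∀ q, 0 ≤ W q := hW.nonneg
  have hR₂ : 0 < R₂ := lt_trans hR₁ hR₁₂
  set ann : Set ℝ² := Metric.ball (0:ℝ²) R₂ \ Metric.ball (0:ℝ²) R₁ with hann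
  -- the two comparison functions
  set f : ℝ² → ℝ := fun x => Real.sqrt (W (U x)) - 1 / Real.sqrt 2 * ‖fderiv ℝ U x‖ with hfdef
  set g : ℝ² → ℝ := fun x => Real.sqrt (W (U x)) + 1 / Real.sqrt 2 * ‖fderiv ℝ U x‖ with hgdef
  have hWU_cont : Continuous fun x => W (U x) := hW2.continuous.comp hU2.continuous
  have hnormDU_cont : Continuous fun x => ‖fderiv ℝ U x‖ := (cont_DU hU2).norm
  have hcf : Continuous f := (Real.continuous_sqrt.comp hWU_cont).sub
    (continuous_const.mul hnormDU_cont)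
  have hcg : Continuous g := (Real.continuous_sqrt.comp hWU_cont).add
    (continuous_const.mul hnormDU_cont)
  have hgnn : ∀ x, 0 ≤ g x := fun x => add_nonneg (Real.sqrt_nonneg _)
    (mul_nonneg (by positivity) (norm_nonneg _))
  have hC₁0 : 0 ≤ C₁ := by
    have h1 := hC₁ 1 one_pos
    have h2 : 0 ≤ energy W U (Metric.ball 0 1) := by
      apply setIntegral_nonneg measurableSet_ball
      intro x _
      have := hWnn (U x)
      positivity
    linarith
  -- identify the rescaled potential energies with Phi
  have hPhi : ∀ R : ℝ, 0 < R →
      (1 / R) * (∫ x in Metric.ball (0:ℝ²) R, W (U x)) = Phi U W R := by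
    intro R hR
    rw [ball_W_eq hU2 hW2 hR.le, pohozaev hU2 hW2 hpde]
    field_simp
  rw [hPhi R₁ hR₁, hPhi R₂ hR₂]
  -- FTC for Phi
  have hFTC : Phi U W R₂ - Phi U W R₁ = ∫ r in R₁..R₂, psi U W r :=
    (intervalIntegral.integral_eq_sub_of_hasDerivAt
      (fun r _ => hasDerivAt_Phi hU2 hW2 hpde r)
      ((cont_psi hU2 hW2).intervalIntegrable (μ := volume) _ _)).symm
  -- the nonnegative integrand |f| * g and its θ-integral
  have hbigp : Continuous (fun q : ℝ × ℝ => |f (ptm q.1 q.2)| * g (ptm q.1 q.2)) :=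
    ((hcf.comp cont_ptm).abs).mul (hcg.comp cont_ptm)
  set bigb : ℝ → ℝ := fun r => ∫ θ in (-Real.pi)..Real.pi, r * (|f (ptm r θ)| * g (ptm r θ))
    with hbigbdef
  have hbigb_cont : Continuous bigb := by
    apply intervalIntegral.continuous_parametric_intervalIntegral_of_continuous'
      (μ := volume) (f := fun r θ => r * (|f (ptm r θ)| * g (ptm r θ)))
    exact (continuous_fst.mul (hbigp.comp continuous_id)).comp continuous_id -- uncurry
  -- pointwise lower bound on psi
  have hpsi_lb : ∀ r ∈ Icc R₁ R₂, -(1/(2*R₁)) * bigb r ≤ psi U W r := by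
    intro r hr
    have hrR₁ : R₁ ≤ r := hr.1
    have hpoint : ∀ θ ∈ Icc (-Real.pi) Real.pi,
        -(|f (ptm r θ)| * g (ptm r θ)) ≤ wI U W r θ + aI U r θ - qI U r θ := by
      intro θ _
      have haInn : 0 ≤ aI U r θ := mul_nonneg (by norm_num) real_inner_self_nonneg
      have hqle : qI U r θ ≤ (1/2) * ‖fderiv ℝ U (ptm r θ)‖^2 := by
        rw [qI, real_inner_self_eq_norm_sq]
        have h1 : ‖fderiv ℝ U (ptm r θ) (tav θ)‖ ≤ ‖fderiv ℝ U (ptm r θ)‖ := by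
          have h2 := (fderiv ℝ U (ptm r θ)).le_opNorm (tav θ)
          rwa [norm_tav, mul_one] at h2
        nlinarith [norm_nonneg (fderiv ℝ U (ptm r θ) (tav θ))]
      have hsq : Real.sqrt (W (U (ptm r θ))) ^ 2 = W (U (ptm r θ)) := Real.sq_sqrt (hWnn _)
      have hk2 : (1 / Real.sqrt 2 * ‖fderiv ℝ U (ptm r θ)‖)^2
          = (1/2) * ‖fderiv ℝ U (ptm r θ)‖^2 := by
        rw [mul_pow, div_pow, one_pow, Real.sq_sqrt (by norm_num : (0:ℝ) ≤ 2)]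
        try ring
      have hfg : f (ptm r θ) * g (ptm r θ)
          = wI U W r θ - (1/2) * ‖fderiv ℝ U (ptm r θ)‖^2 := by
        have hcalc : f (ptm r θ) * g (ptm r θ)
            = Real.sqrt (W (U (ptm r θ))) ^ 2 - (1 / Real.sqrt 2 * ‖fderiv ℝ U (ptm r θ)‖)^2 := by
          rw [hfdef, hgdef]; ring
        rw [hcalc, hsq, hk2]
        rfl
      have hlow : -(|f (ptm r θ)| * g (ptm r θ)) ≤ f (ptm r θ) * g (ptm r θ) := by
        have h3 : -|f (ptm r θ)| ≤ f (ptm r θ) := neg_abs_le _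
        have h4 := mul_le_mul_of_nonneg_right h3 (hgnn (ptm r θ))
        rwa [neg_mul] at h4
      calc -(|f (ptm r θ)| * g (ptm r θ)) ≤ f (ptm r θ) * g (ptm r θ) := hlow
        _ = wI U W r θ - (1/2) * ‖fderiv ℝ U (ptm r θ)‖^2 := hfg
        _ ≤ wI U W r θ + aI U r θ - qI U r θ := by linarith [hqle, haInn]
    -- integrate in θ
    have haint := (contθ (cont_aI hU2) r).intervalIntegrable (μ := volume) (-Real.pi) Real.pi
    have hqint := (contθ (cont_qI hU2) r).intervalIntegrable (μ := volume) (-Real.pi) Real.pi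
    have hwint := (contθ (cont_wI hU2 hW2) r).intervalIntegrable (μ := volume) (-Real.pi) Real.pi
    have hbigθ : Continuous fun θ => |f (ptm r θ)| * g (ptm r θ) :=
      contθ (H := fun r θ => |f (ptm r θ)| * g (ptm r θ)) hbigp r
    have hbigint := hbigθ.intervalIntegrable (μ := volume) (-Real.pi) Real.pi
    have hpilt : -Real.pi ≤ Real.pi := by linarith [Real.pi_pos]
    have hmono : ∫ θ in (-Real.pi)..Real.pi, -(|f (ptm r θ)| * g (ptm r θ))
        ≤ ∫ θ in (-Real.pi)..Real.pi, (wI U W r θ + aI U r θ - qI U r θ) :=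
      intervalIntegral.integral_mono_on hpilt hbigint.neg ((hwint.add haint).sub hqint) hpoint
    have hsplit2 : ∫ θ in (-Real.pi)..Real.pi, (wI U W r θ + aI U r θ - qI U r θ)
        = wbar U W r + abar U r - qbar U r := by
      rw [intervalIntegral.integral_sub (hwint.add haint) hqint,
        intervalIntegral.integral_add hwint haint]
      rfl
    have hI0 : 0 ≤ ∫ θ in (-Real.pi)..Real.pi, |f (ptm r θ)| * g (ptm r θ) :=
      intervalIntegral.integral_nonneg hpilt
        (fun θ _ => mul_nonneg (abs_nonneg _) (hgnn _))
    have hbigr : bigb r = r * ∫ θ in (-Real.pi)..Real.pi, |f (ptm r θ)| * g (ptm r θ) := by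
      rw [hbigbdef]
      exact intervalIntegral.integral_const_mul _ _
    have hneg : ∫ θ in (-Real.pi)..Real.pi, -(|f (ptm r θ)| * g (ptm r θ))
        = -∫ θ in (-Real.pi)..Real.pi, |f (ptm r θ)| * g (ptm r θ) :=
      intervalIntegral.integral_neg
    set I := ∫ θ in (-Real.pi)..Real.pi, |f (ptm r θ)| * g (ptm r θ)
    rw [hneg, hsplit2] at hmono
    rw [psi, hbigr]
    have hfrac : (1/(2*R₁)) * (r * I) - (1/2) * I = (I * (r - R₁)) / (2 * R₁) := by
      field_simp
    have hfrac0 : 0 ≤ (I * (r - R₁)) / (2 * R₁) :=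
      div_nonneg (mul_nonneg hI0 (by linarith)) (by linarith)
    linarith
  -- integrate in r
  have hmono2 : ∫ r in R₁..R₂, -(1/(2*R₁)) * bigb r ≤ ∫ r in R₁..R₂, psi U W r :=
    intervalIntegral.integral_mono_on hR₁₂.le
      ((continuous_const.mul hbigb_cont).intervalIntegrable (μ := volume) _ _)
      ((cont_psi hU2 hW2).intervalIntegrable (μ := volume) _ _) hpsi_lb
  have hconst : ∫ r in R₁..R₂, -(1/(2*R₁)) * bigb r = -(1/(2*R₁)) * ∫ r in R₁..R₂, bigb r :=
    intervalIntegral.integral_const_mul _ _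
  -- polar coordinates on the annulus
  have hpolar : ∫ x in ann, |f x| * g x = ∫ r in R₁..R₂, bigb r := by
    rw [hann]
    exact polar_annulus (fun x => |f x| * g x) (hcf.abs.mul hcg) hR₁.le hR₁₂.le
  -- Cauchy–Schwarz
  have hCS : ∫ x in ann, |f x| * g x
      ≤ Real.sqrt (∫ x in ann, f x ^ 2) * Real.sqrt (∫ x in ann, g x ^ 2) :=
    cauchy_schwarz_set f g hcf hcg hgnn (R := R₂) (fun x hx => hx.1)
  -- energy bound for the g-factor
  have hg2 : ∫ x in ann, g x ^ 2 ≤ 2 * (C₁ * R₂) := by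
    have hEint : Continuous (fun x : ℝ² => (1/2) * ‖fderiv ℝ U x‖^2 + W (U x)) :=
      (continuous_const.mul (hnormDU_cont.pow 2)).add hWU_cont
    have hIball : IntegrableOn (fun x : ℝ² => (1/2) * ‖fderiv ℝ U x‖^2 + W (U x))
        (Metric.ball (0:ℝ²) R₂) volume :=
      (hEint.continuousOn.integrableOn_compact (isCompact_closedBall _ _)).mono_set
        ball_subset_closedBall
    have hIann : IntegrableOn (fun x : ℝ² => (1/2) * ‖fderiv ℝ U x‖^2 + W (U x)) ann volume :=
      hIball.mono_set diff_subset
    have hIg2 : IntegrableOn (fun x => g x ^ 2) ann volume :=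
      ((hcg.pow 2).continuousOn.integrableOn_compact (isCompact_closedBall (0:ℝ²) R₂)).mono_set
        ((diff_subset).trans ball_subset_closedBall)
    have h1 : ∫ x in ann, g x ^ 2
        ≤ ∫ x in ann, 2 * ((1/2) * ‖fderiv ℝ U x‖^2 + W (U x)) := by
      apply setIntegral_mono_on hIg2 (hIann.const_mul 2)
        (measurableSet_ball.diff measurableSet_ball)
      intro x _
      have hsq : Real.sqrt (W (U x)) ^ 2 = W (U x) := Real.sq_sqrt (hWnn _)
      have hk2 : (1 / Real.sqrt 2 * ‖fderiv ℝ U x‖)^2 = (1/2) * ‖fderiv ℝ U x‖^2 := by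
        rw [mul_pow, div_pow, one_pow, Real.sq_sqrt (by norm_num : (0:ℝ) ≤ 2)]
        try ring
      have hexp : g x = Real.sqrt (W (U x)) + 1 / Real.sqrt 2 * ‖fderiv ℝ U x‖ := rfl
      rw [hexp]
      nlinarith [sq_nonneg (Real.sqrt (W (U x)) - 1 / Real.sqrt 2 * ‖fderiv ℝ U x‖),
        hsq, hk2]
    have h2 : ∫ x in ann, 2 * ((1/2) * ‖fderiv ℝ U x‖^2 + W (U x))
        = 2 * ∫ x in ann, ((1/2) * ‖fderiv ℝ U x‖^2 + W (U x)) := MeasureTheory.integral_const_mul 2 _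
    have h3 : ∫ x in ann, ((1/2) * ‖fderiv ℝ U x‖^2 + W (U x))
        ≤ ∫ x in Metric.ball (0:ℝ²) R₂, ((1/2) * ‖fderiv ℝ U x‖^2 + W (U x)) := by
      apply setIntegral_mono_set hIball
      · filter_upwards with x
        have := hWnn (U x)
        positivity
      · exact HasSubset.Subset.eventuallyLE diff_subset
    have h4 : energy W U (Metric.ball (0:ℝ²) R₂) ≤ C₁ * R₂ := hC₁ R₂ hR₂
    rw [energy] at h4
    calc ∫ x in ann, g x ^ 2 ≤ 2 * ∫ x in ann, ((1/2) * ‖fderiv ℝ U x‖^2 + W (U x)) := by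
          rw [← h2]; exact h1
      _ ≤ 2 * (C₁ * R₂) := by
          have := le_trans h3 (le_of_eq rfl)
          nlinarith [le_trans h3 h4]
  -- assemble
  set Q : ℝ := ∫ x in ann, f x ^ 2 with hQdef
  have hQ0 : 0 ≤ Q := setIntegral_nonneg (measurableSet_ball.diff measurableSet_ball)
    (fun x _ => sq_nonneg _)
  have hgs : Real.sqrt (∫ x in ann, g x ^ 2) ≤ Real.sqrt (2 * (C₁ * R₂)) :=
    Real.sqrt_le_sqrt hg2
  have hchain : -(1/(2*R₁)) * (Real.sqrt Q * Real.sqrt (2 * (C₁ * R₂)))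
      ≤ Phi U W R₂ - Phi U W R₁ := by
    rw [hFTC]
    have e5 : ∫ x in ann, |f x| * g x ≤ Real.sqrt Q * Real.sqrt (2 * (C₁ * R₂)) := by
      apply le_trans hCS
      exact mul_le_mul_of_nonneg_left hgs (Real.sqrt_nonneg _)
    have e6 : -(1/(2*R₁)) * (Real.sqrt Q * Real.sqrt (2 * (C₁ * R₂)))
        ≤ -(1/(2*R₁)) * ∫ x in ann, |f x| * g x := by
      apply neg_le_neg at e5
      have h7 : 0 < 1/(2*R₁) := by positivity
      nlinarith [e5]
    apply le_trans e6
    rw [hpolar, ← hconst]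
    exact hmono2
  -- final arithmetic
  have hs4 : Real.sqrt (2 * (C₁ * R₂)) = 2 * Real.sqrt (C₁/2) * Real.sqrt R₂ := by
    rw [show 2 * (C₁ * R₂) = (2:ℝ)^2 * (C₁/2) * R₂ by ring]
    rw [Real.sqrt_mul (by positivity) R₂, Real.sqrt_mul (by positivity) (C₁/2),
      Real.sqrt_sq (by norm_num : (0:ℝ) ≤ 2)]
  have hfinal : -(1/(2*R₁)) * (Real.sqrt Q * Real.sqrt (2 * (C₁ * R₂)))
      = -(Real.sqrt (C₁ / 2)) * (Real.sqrt R₂ / R₁) * Real.sqrt Q := by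
    rw [hs4]
    field_simp
  rw [ge_iff_le]
  show -(Real.sqrt (C₁/2)) * (Real.sqrt R₂ / R₁) * Real.sqrt Q ≤ Phi U W R₂ - Phi U W R₁
  rw [← hfinal]
  exact hchain
end
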